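/- Let r > 0, T > 0 and 2 < q < ∞. If q > (π/T)^{2r} + 2, then the sharp embedding constant λ_{q,r}(T) := inf over nonzero y in H^r(-T,T) of ‖y‖_{H^r}/‖y‖_{L_q(-T,T)} satisfies λ_{q,r}(T) < (2T)^{1/2-1/q}; equivalently, there exists a nonzero y ∈ H^r(-T,T) with ‖y‖_{H^r} < (2T)^{1/2-1/q}·‖y‖_{L_q(-T,T)}. In particular the constant function c(x) ≡ 1 does not attain the infimum. -/

import Mathlib

open MeasureTheory intervalIntegral

/-- Fourier coefficient of a (2T-periodic) function y with respect to the orthonormal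
exponential system (2T)^{-1/2}*e^{i pi k x/T} on (-T,T). -/
noncomputable def fcoef (T : ℝ) (y : ℝ → ℝ) (k : ℤ) : ℂ :=
  (Real.sqrt (2 * T) : ℂ)⁻¹ *
    ∫ x in (-T)..T, (y x : ℂ) * Complex.exp (-(Complex.I * Real.pi * k * x) / T)

/-- The squared H^r(-T,T) norm: ‖y‖²_{H^r} = Σ_{k∈ℤ} |ŷ_k|²·[(πk/T)^{2r} + 1]. -/
noncomputable def hrNormSq (r T : ℝ) (y : ℝ → ℝ) : ℝ :=
  ∑' k : ℤ, ‖fcoef T y k‖ ^ 2 * (|Real.pi * k / T| ^ (2 * r) + 1)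

open Set Filter

lemma expInt (T : ℝ) (hT : 0 < T) (n : ℤ) :
    ∫ x in (-T)..T, Complex.exp (Complex.I * Real.pi * n * x / T) =
      if n = 0 then (2 * T : ℝ) else 0 := by
  rcases eq_or_ne n 0 with h | h
  · simp [h]
    norm_num
    ring
  · rw [if_neg h]
    have hc : (Complex.I * Real.pi * n / T : ℂ) ≠ 0 := by
      apply div_ne_zero
      · exact mul_ne_zero (mul_ne_zero Complex.I_ne_zero
          (by exact_mod_cast Real.pi_ne_zero)) (by exact_mod_cast h)
      · exact_mod_cast hT.ne'
    have : ∀ x : ℝ, Complex.I * Real.pi * n * x / T = (Complex.I * Real.pi * n / T) * x := by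
      intro x; ring
    simp only [this]
    rw [integral_exp_mul_complex hc]
    have hT0 : (T : ℂ) ≠ 0 := by exact_mod_cast hT.ne'
    have e1 : (Complex.I * Real.pi * n / T) * (T : ℝ) = (n : ℂ) * (Real.pi * Complex.I) := by
      field_simp
    have e2 : (Complex.I * Real.pi * n / T) * ((-T : ℝ) : ℂ) = ((-n : ℤ) : ℂ) * (Real.pi * Complex.I) := by
      push_cast; field_simp
    rw [e1, e2, Complex.exp_int_mul, Complex.exp_int_mul, Complex.exp_pi_mul_I]
    have : ((-1 : ℂ)) ^ (-n) = (-1 : ℂ) ^ n := by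
      rw [zpow_neg]
      refine inv_eq_of_mul_eq_one_left ?_
      rw [← mul_zpow]; norm_num
    push_cast
    rw [this, sub_self, zero_div]

lemma fcoef_eq (T ε : ℝ) (hT : 0 < T) (k : ℤ) :
    fcoef T (fun x => 1 + ε * Real.cos (Real.pi * x / T)) k =
      if k = 0 then ((Real.sqrt (2 * T) : ℝ) : ℂ)
      else if k = 1 ∨ k = -1 then ((ε * Real.sqrt (2 * T) / 2 : ℝ) : ℂ) else 0 := by
  have hs : Real.sqrt (2 * T) * Real.sqrt (2 * T) = 2 * T :=
    Real.mul_self_sqrt (by positivity)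
  have hsne : (Real.sqrt (2 * T) : ℂ) ≠ 0 := by
    exact_mod_cast Real.sqrt_ne_zero'.2 (by positivity)
  have key : ∀ x : ℝ,
      ((1 + ε * Real.cos (Real.pi * x / T) : ℝ) : ℂ) *
          Complex.exp (-(Complex.I * Real.pi * k * x) / T)
        = Complex.exp (Complex.I * Real.pi * ((-k : ℤ) : ℂ) * x / T)
          + (ε / 2 : ℂ) * Complex.exp (Complex.I * Real.pi * (((1 - k : ℤ)) : ℂ) * x / T)
          + (ε / 2 : ℂ) * Complex.exp (Complex.I * Real.pi * (((-1 - k : ℤ)) : ℂ) * x / T) := by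
    intro x
    have e1 : Complex.exp (Complex.I * Real.pi * ((-k : ℤ) : ℂ) * x / T)
        = Complex.exp (-(Complex.I * Real.pi * k * x) / T) := by
      congr 1; push_cast; ring
    have e2 : Complex.exp (Complex.I * Real.pi * (((1 - k : ℤ)) : ℂ) * x / T)
        = Complex.exp (Complex.I * Real.pi * x / T) *
            Complex.exp (-(Complex.I * Real.pi * k * x) / T) := by
      rw [← Complex.exp_add]; congr 1; push_cast; ring
    have e3 : Complex.exp (Complex.I * Real.pi * (((-1 - k : ℤ)) : ℂ) * x / T)
        = Complex.exp (-(Complex.I * Real.pi * x / T)) *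
            Complex.exp (-(Complex.I * Real.pi * k * x) / T) := by
      rw [← Complex.exp_add]; congr 1; push_cast; ring
    have hcos : Complex.cos ((Real.pi : ℂ) * x / T) * 2
        = Complex.exp (Complex.I * Real.pi * x / T)
          + Complex.exp (-(Complex.I * Real.pi * x / T)) := by
      have h2 := Complex.two_cos ((Real.pi : ℂ) * x / T)
      rw [show ((Real.pi : ℂ) * x / T) * Complex.I = Complex.I * Real.pi * x / T from by
        ring,
        show -((Real.pi : ℂ) * x / T) * Complex.I = -(Complex.I * Real.pi * x / T) from by
        ring] at h2
      linear_combination h2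
    rw [e1, e2, e3]
    push_cast
    linear_combination ((ε : ℂ) / 2) * Complex.exp (-(Complex.I * Real.pi * k * x) / T) * hcos
  have hcont : ∀ n : ℤ, Continuous
      (fun x : ℝ => Complex.exp (Complex.I * Real.pi * (n : ℂ) * x / T)) := by
    intro n
    apply Complex.continuous_exp.comp
    exact (continuous_const.mul Complex.continuous_ofReal).div_const _
  have hInt : ∀ n : ℤ, IntervalIntegrable
      (fun x : ℝ => Complex.exp (Complex.I * Real.pi * (n : ℂ) * x / T))
      volume (-T) T := fun n => (hcont n).intervalIntegrable _ _
  unfold fcoef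
  rw [show (fun x : ℝ => (((fun x : ℝ => 1 + ε * Real.cos (Real.pi * x / T)) x : ℝ) : ℂ) *
      Complex.exp (-(Complex.I * Real.pi * k * x) / T))
    = (fun x : ℝ => Complex.exp (Complex.I * Real.pi * ((-k : ℤ) : ℂ) * x / T)
        + ((ε / 2 : ℂ) * Complex.exp (Complex.I * Real.pi * (((1 - k : ℤ)) : ℂ) * x / T)
          + (ε / 2 : ℂ) * Complex.exp (Complex.I * Real.pi * (((-1 - k : ℤ)) : ℂ) * x / T)))
    from funext fun x => by rw [key x]; ring]
  rw [intervalIntegral.integral_add (hInt (-k))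
      (((hInt (1 - k)).const_mul _).add ((hInt (-1 - k)).const_mul _)),
    intervalIntegral.integral_add ((hInt (1 - k)).const_mul _) ((hInt (-1 - k)).const_mul _),
    intervalIntegral.integral_const_mul, intervalIntegral.integral_const_mul,
    expInt T hT (-k), expInt T hT (1 - k), expInt T hT (-1 - k)]
  have h2T : ((2 * T : ℝ) : ℂ) = (Real.sqrt (2 * T) : ℂ) * (Real.sqrt (2 * T) : ℂ) := by
    exact_mod_cast hs.symm
  rcases eq_or_ne k 0 with hk | hk
  · subst hk
    simp only [neg_zero, if_pos rfl, if_neg (by norm_num : ¬((1 : ℤ) - 0 = 0)),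
      if_neg (by norm_num : ¬((-1 : ℤ) - 0 = 0)), Complex.ofReal_zero, mul_zero, add_zero,
      if_true]
    rw [h2T, inv_mul_cancel_left₀ hsne]
  · rcases eq_or_ne k 1 with hk1 | hk1
    · subst hk1
      simp only [if_neg hk, if_pos (Or.inl rfl), if_neg (by norm_num : ¬(-(1 : ℤ) = 0)),
        if_pos (by norm_num : (1 : ℤ) - 1 = 0), if_neg (by norm_num : ¬((-1 : ℤ) - 1 = 0)),
        Complex.ofReal_zero, mul_zero, add_zero, zero_add]
      rw [h2T]
      simp only [Complex.ofReal_div, Complex.ofReal_mul, Complex.ofReal_ofNat]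
      field_simp
      have hs2 : ((Real.sqrt 2 : ℝ) : ℂ) ≠ 0 := by
        exact_mod_cast Real.sqrt_ne_zero'.2 (by norm_num)
      have hsT : ((Real.sqrt T : ℝ) : ℂ) ≠ 0 := by
        exact_mod_cast Real.sqrt_ne_zero'.2 hT
      simp only [true_or, if_true]
      ring
    · rcases eq_or_ne k (-1) with hkm | hkm
      · subst hkm
        simp only [if_neg hk, if_pos (Or.inr rfl), if_neg (by norm_num : ¬(-(-1 : ℤ) = 0)),
          if_neg (by norm_num : ¬((1 : ℤ) - -1 = 0)), if_pos (by norm_num : (-1 : ℤ) - -1 = 0),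
          Complex.ofReal_zero, mul_zero, add_zero, zero_add]
        rw [h2T]
        simp only [Complex.ofReal_div, Complex.ofReal_mul, Complex.ofReal_ofNat]
        field_simp
        have hs2 : ((Real.sqrt 2 : ℝ) : ℂ) ≠ 0 := by
          exact_mod_cast Real.sqrt_ne_zero'.2 (by norm_num)
        have hsT : ((Real.sqrt T : ℝ) : ℂ) ≠ 0 := by
          exact_mod_cast Real.sqrt_ne_zero'.2 hT
        simp only [or_true, if_true]
        ring
      · simp only [if_neg hk, if_neg (by simp [hk1, hkm] : ¬(k = 1 ∨ k = -1)),
          if_neg (by omega : ¬(-k = 0)), if_neg (by omega : ¬(1 - k = 0)),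
          if_neg (by omega : ¬(-1 - k = 0)), Complex.ofReal_zero, mul_zero, add_zero]


lemma term_eq (r T ε : ℝ) (hr : 0 < r) (hT : 0 < T) (k : ℤ) :
    ‖fcoef T (fun x => 1 + ε * Real.cos (Real.pi * x / T)) k‖ ^ 2
        * (|Real.pi * k / T| ^ (2 * r) + 1)
      = if k = 0 then 2 * T
        else if k = 1 ∨ k = -1 then ε ^ 2 * T / 2 * ((Real.pi / T) ^ (2 * r) + 1)
        else 0 := by
  have hsq : Real.sqrt (2 * T) ^ 2 = 2 * T := Real.sq_sqrt (by positivity)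
  rw [fcoef_eq T ε hT k]
  rcases eq_or_ne k 0 with hk | hk
  · subst hk
    simp only [if_pos rfl, if_true]
    rw [Complex.norm_real, Real.norm_eq_abs, _root_.sq_abs, hsq]
    norm_num
    rw [Real.zero_rpow (by positivity : 2 * r ≠ 0)]
    ring
  · rcases eq_or_ne k 1 with hk1 | hk1
    · subst hk1
      simp only [if_neg hk, if_pos (Or.inl rfl), true_or, if_true]
      rw [Complex.norm_real, Real.norm_eq_abs, _root_.sq_abs]
      have : |Real.pi * ((1 : ℤ) : ℝ) / T| = Real.pi / T := by
        rw [abs_of_pos (by positivity)]; norm_num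
      rw [this]
      rw [div_pow, mul_pow, hsq]
      ring
    · rcases eq_or_ne k (-1) with hkm | hkm
      · subst hkm
        simp only [if_neg hk, if_pos (Or.inr rfl), or_true, if_true]
        rw [Complex.norm_real, Real.norm_eq_abs, _root_.sq_abs]
        have : |Real.pi * ((-1 : ℤ) : ℝ) / T| = Real.pi / T := by
          rw [abs_div, abs_of_pos hT, abs_mul]
          rw [abs_of_pos Real.pi_pos]
          norm_num
        rw [this]
        rw [div_pow, mul_pow, hsq]
        ring
      · simp only [if_neg hk, if_neg (by simp [hk1, hkm] : ¬(k = 1 ∨ k = -1))]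
        simp

lemma hr_summable (r T ε : ℝ) (hr : 0 < r) (hT : 0 < T) :
    Summable (fun k : ℤ =>
      ‖fcoef T (fun x => 1 + ε * Real.cos (Real.pi * x / T)) k‖ ^ 2
        * (|Real.pi * k / T| ^ (2 * r) + 1)) := by
  apply summable_of_ne_finset_zero (s := ({-1, 0, 1} : Finset ℤ))
  intro k hk
  rw [term_eq r T ε hr hT k]
  simp only [Finset.mem_insert, Finset.mem_singleton] at hk
  push_neg at hk
  rw [if_neg hk.2.1, if_neg (by simp [hk.2.2, hk.1])]

lemma hr_val (r T ε : ℝ) (hr : 0 < r) (hT : 0 < T) :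
    hrNormSq r T (fun x => 1 + ε * Real.cos (Real.pi * x / T))
      = 2 * T + ε ^ 2 * T * ((Real.pi / T) ^ (2 * r) + 1) := by
  unfold hrNormSq
  rw [tsum_congr (fun k => term_eq r T ε hr hT k)]
  rw [tsum_eq_sum (s := ({-1, 0, 1} : Finset ℤ)) (by
    intro k hk
    simp only [Finset.mem_insert, Finset.mem_singleton] at hk
    push_neg at hk
    rw [if_neg hk.2.1, if_neg (by simp [hk.2.2, hk.1])])]
  rw [show ({-1, 0, 1} : Finset ℤ) = {-1} ∪ {0} ∪ {1} from by decide]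
  rw [Finset.sum_union (by decide), Finset.sum_union (by decide)]
  simp only [Finset.sum_singleton]
  norm_num
  ring

lemma gDeriv (q c : ℝ) (u : ℝ) (hu : -1 < u) :
    HasDerivAt (fun u : ℝ => (1 + u) ^ q - (q * u + c * u ^ 2))
      (q * (1 + u) ^ (q - 1) - (q + 2 * c * u)) u := by
  have h1 : HasDerivAt (fun u : ℝ => 1 + u) 1 u := (hasDerivAt_id u).const_add 1
  have h2 : HasDerivAt (fun u : ℝ => (1 + u) ^ q) (q * (1 + u) ^ (q - 1)) u := by
    have := (Real.hasDerivAt_rpow_const (x := 1 + u) (p := q)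
      (Or.inl (by linarith))).comp u h1
    simpa [Function.comp_def] using this
  have h3 : HasDerivAt (fun u : ℝ => q * u + c * u ^ 2) (q + 2 * c * u) u := by
    have ha : HasDerivAt (fun u : ℝ => q * u) q u := by
      simpa using (hasDerivAt_id u).const_mul q
    have hb : HasDerivAt (fun u : ℝ => c * u ^ 2) (2 * c * u) u := by
      have := (hasDerivAt_pow 2 u).const_mul c
      simpa using this.congr_deriv (by ring)
    exact ha.add hb
  exact h2.sub h3

lemma pointP (q c ε : ℝ) (hq : 2 < q) (hc0 : 0 < c) (hε0 : 0 < ε) (hε : ε ≤ 1 / 2)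
    (hc1 : 2 * c ≤ q * (q - 1))
    (hc2 : 2 * c ≤ q * (1 - (1 - ε) ^ (q - 1)) / ε) :
    ∀ u ∈ Set.Icc (-ε) ε, 1 + q * u + c * u ^ 2 ≤ (1 + u) ^ q := by
  set g : ℝ → ℝ := fun u => (1 + u) ^ q - (q * u + c * u ^ 2) with hg
  have hgformula : ∀ u : ℝ, -1 < u → deriv g u = q * (1 + u) ^ (q - 1) - (q + 2 * c * u) :=
    fun u hu => (gDeriv q c u hu).deriv
  have hcont : ContinuousOn g (Icc (-ε) ε) := by
    intro u hu
    exact ((gDeriv q c u (by simp only [mem_Icc] at hu; linarith)).continuousAt).continuousWithinAt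
  have hdiff : ∀ s : Set ℝ, s ⊆ Ioo (-(1:ℝ)) 1 → DifferentiableOn ℝ g s := by
    intro s hs u hu
    exact ((gDeriv q c u (hs hu).1).differentiableAt).differentiableWithinAt
  intro u hu
  simp only [mem_Icc] at hu
  have key : g 0 ≤ g u := by
    rcases le_or_gt 0 u with h0 | h0
    · have mono : MonotoneOn g (Icc 0 ε) := by
        apply monotoneOn_of_deriv_nonneg (convex_Icc 0 ε)
        · exact hcont.mono (fun x hx => by simp only [mem_Icc] at *; constructor <;> linarith [hx.1, hx.2])
        · rw [interior_Icc]
          exact hdiff _ (fun x hx => by simp only [mem_Ioo] at *; constructor <;> linarith [hx.1, hx.2])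
        · rw [interior_Icc]
          intro x hx
          simp only [mem_Ioo] at hx
          rw [hgformula x (by linarith)]
          have hb : 1 + (q - 1) * x ≤ (1 + x) ^ (q - 1) := by
            have := one_add_mul_self_le_rpow_one_add (s := x) (by linarith) (p := q - 1) (by linarith)
            linarith [this]
          nlinarith [hx.1, hq, hb]
      exact mono (by constructor <;> norm_num [hε0.le]) (by constructor <;> linarith) h0
    · have anti : AntitoneOn g (Icc (-ε) 0) := by
        apply antitoneOn_of_deriv_nonpos (convex_Icc (-ε) 0)
        · exact hcont.mono (fun x hx => by simp only [mem_Icc] at *; constructor <;> linarith [hx.1, hx.2])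
        · rw [interior_Icc]
          exact hdiff _ (fun x hx => by simp only [mem_Ioo] at *; constructor <;> linarith [hx.1, hx.2])
        · rw [interior_Icc]
          intro x hx
          simp only [mem_Ioo] at hx
          rw [hgformula x (by linarith)]
          set t := (1 - ε) ^ (q - 1) with ht
          have hc2' : 2 * c * ε ≤ q * (1 - t) := by
            rw [le_div_iff₀ hε0] at hc2
            linarith [hc2]
          have hxe : 0 ≤ 1 + x / ε := by
            have hxe1 : -(x / ε) ≤ 1 := by
              rw [← neg_div, div_le_one hε0]; linarith [hx.1]
            linarith [hxe1]
          have hchord : (1 + x) ^ (q - 1)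
              ≤ (-x / ε) * t + (1 + x / ε) * 1 := by
            have hcv := convexOn_rpow (p := q - 1) (by linarith)
            have hmem1 : (1 - ε) ∈ Ici (0:ℝ) := by simp only [mem_Ici]; linarith
            have hmem2 : (1:ℝ) ∈ Ici (0:ℝ) := by simp only [mem_Ici]; norm_num
            have hA : (0:ℝ) ≤ -x / ε := by
              apply div_nonneg _ hε0.le; linarith [hx.2]
            have hAB : -x / ε + (1 + x / ε) = 1 := by field_simp; ring
            have h := hcv.2 hmem1 hmem2 hA hxe hAB
            have harg : (-x / ε) • (1 - ε) + (1 + x / ε) • (1 : ℝ) = 1 + x := by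
              simp only [smul_eq_mul]; field_simp; ring
            rw [harg] at h
            simpa [smul_eq_mul, Real.one_rpow, ht] using h
          have hchord2 : ε * ((1 + x) ^ (q - 1)) ≤ -x * t + ε + x := by
            have h4 := mul_le_mul_of_nonneg_left hchord hε0.le
            have hsimp : ε * ((-x / ε) * t + (1 + x / ε) * 1) = -x * t + ε + x := by
              field_simp; ring
            rw [hsimp] at h4
            exact h4
          have h5 := mul_le_mul_of_nonneg_left hchord2 (by linarith : (0:ℝ) ≤ q)
          have hx2 : 0 < -x := by linarith [hx.2]
          have hmain : ε * (q * (1 + x) ^ (q - 1) - (q + 2 * c * x)) ≤ 0 := by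
            nlinarith [h5, hc2', hx2]
          nlinarith [hmain, hε0]
      exact anti (by constructor <;> linarith [hu.1, h0.le])
        (by constructor <;> linarith [hε0.le]) h0.le
  have g0 : g 0 = 1 := by simp [hg, Real.one_rpow]
  rw [g0] at key
  simp only [hg] at key
  linarith [key]

lemma slopeL2 (p : ℝ) (hp : 1 ≤ p) :
    Tendsto (fun x : ℝ => ((1 + x) ^ p - 1) / x) (nhdsWithin 0 (Set.Ioi 0)) (nhds p) := by
  have h1 : HasDerivAt (fun x : ℝ => 1 + x) 1 0 := (hasDerivAt_id (0:ℝ)).const_add 1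
  have hd : HasDerivAt (fun x : ℝ => (1 + x) ^ p) p 0 := by
    have := (Real.hasDerivAt_rpow_const (x := 1 + (0:ℝ)) (p := p)
      (Or.inl (by norm_num))).comp (0:ℝ) h1
    simpa [Function.comp_def] using this
  have hs := hasDerivAt_iff_tendsto_slope.1 hd
  have : ∀ x : ℝ, slope (fun x : ℝ => (1 + x) ^ p) 0 x = ((1 + x) ^ p - 1) / x := by
    intro x
    rw [slope_def_field]
    simp [Real.one_rpow]
  rw [show (fun x : ℝ => ((1 + x) ^ p - 1) / x)
      = slope (fun x : ℝ => (1 + x) ^ p) 0 from funext fun x => (this x).symm]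
  exact hs.mono_left (nhdsWithin_mono _ (fun x hx => by simp only [mem_Ioi] at hx; simp; linarith))

lemma slopeL1 (p : ℝ) (hp : 1 ≤ p) :
    Tendsto (fun x : ℝ => (1 - (1 - x) ^ p) / x) (nhdsWithin 0 (Set.Ioi 0)) (nhds p) := by
  have h1 : HasDerivAt (fun x : ℝ => 1 - x) (-1) 0 := by
    simpa using (hasDerivAt_id (0:ℝ)).const_sub 1
  have hd : HasDerivAt (fun x : ℝ => -((1 - x) ^ p)) p 0 := by
    have := ((Real.hasDerivAt_rpow_const (x := 1 - (0:ℝ)) (p := p)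
      (Or.inl (by norm_num))).comp (0:ℝ) h1).neg
    simpa [Function.comp_def, Pi.neg_def] using this
  have hs := hasDerivAt_iff_tendsto_slope.1 hd
  have : ∀ x : ℝ, slope (fun x : ℝ => -((1 - x) ^ p)) 0 x = (1 - (1 - x) ^ p) / x := by
    intro x
    rw [slope_def_field, sub_zero]
    congr 1 <;> simp [Real.one_rpow] <;> ring
  rw [show (fun x : ℝ => (1 - (1 - x) ^ p) / x)
      = slope (fun x : ℝ => -((1 - x) ^ p)) 0 from funext fun x => (this x).symm]
  exact hs.mono_left (nhdsWithin_mono _ (fun x hx => by simp only [mem_Ioi] at hx; simp; linarith))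

lemma chordUB (p δ m : ℝ) (hp : 1 ≤ p) (hδ : 0 < δ) (hm : 0 ≤ m) (hmδ : m ≤ δ) :
    (1 + m) ^ p ≤ 1 + m * (((1 + δ) ^ p - 1) / δ) := by
  have hcv := convexOn_rpow (p := p) hp
  have hmem1 : (1:ℝ) ∈ Ici (0:ℝ) := by norm_num
  have hmem2 : (1 + δ) ∈ Ici (0:ℝ) := by simp only [mem_Ici]; linarith
  have hA : (0:ℝ) ≤ 1 - m / δ := by
    have : m / δ ≤ 1 := by rw [div_le_one hδ]; exact hmδ
    linarith
  have hB : (0:ℝ) ≤ m / δ := div_nonneg hm hδ.le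
  have hAB : (1 - m / δ) + m / δ = 1 := by ring
  have h := hcv.2 hmem1 hmem2 hA hB hAB
  have harg : (1 - m / δ) • (1:ℝ) + (m / δ) • (1 + δ) = 1 + m := by
    simp only [smul_eq_mul]; field_simp; ring
  rw [harg] at h
  simp only [smul_eq_mul, Real.one_rpow] at h
  calc (1 + m) ^ p ≤ (1 - m / δ) * 1 + m / δ * (1 + δ) ^ p := h
    _ = 1 + m * (((1 + δ) ^ p - 1) / δ) := by field_simp; ring

lemma choose_eps (q A : ℝ) (hq2 : 2 < q) (hA1 : 1 ≤ A) (hAq : A < q - 1) :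
    ∃ ε c : ℝ, 0 < ε ∧ ε ≤ 1 / 2 ∧ 0 < c ∧ 2 * c ≤ q * (q - 1) ∧
      2 * c ≤ q * (1 - (1 - ε) ^ (q - 1)) / ε ∧
      (1 + A * ε ^ 2 / 2) ^ (q / 2) < 1 + c * ε ^ 2 / 2 := by
  set c : ℝ := q * (A + (q - 1)) / 4 with hc
  have hq0 : 0 < q := by linarith
  have hA0 : 0 < A := by linarith
  have hc0 : 0 < c := by rw [hc]; nlinarith
  have hc1 : 2 * c ≤ q * (q - 1) := by rw [hc]; nlinarith
  -- pick δ for the chord bound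
  have hgap : q * A / 2 < c := by rw [hc]; nlinarith
  have hL2 := slopeL2 (q / 2) (by linarith)
  have hev2 : ∀ᶠ δ in nhdsWithin 0 (Set.Ioi 0),
      ((1 + δ) ^ (q / 2) - 1) / δ < c / A := by
    apply hL2.eventually_lt_const
    rw [lt_div_iff₀ hA0] at *
    nlinarith [hgap]
  obtain ⟨δ, hδK, hδpos⟩ := (hev2.and eventually_mem_nhdsWithin).exists
  simp only [Set.mem_Ioi] at hδpos
  set K : ℝ := ((1 + δ) ^ (q / 2) - 1) / δ with hK
  -- pick ε
  have hL1 := slopeL1 (q - 1) (by linarith)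
  have hev1 : ∀ᶠ ε in nhdsWithin 0 (Set.Ioi 0),
      (A + (q - 1)) / 2 < (1 - (1 - ε) ^ (q - 1)) / ε :=
    hL1.eventually_const_lt (by linarith)
  have hev3 : ∀ᶠ ε in nhdsWithin 0 (Set.Ioi 0), A * ε ^ 2 / 2 < δ := by
    have hcont : Filter.Tendsto (fun ε : ℝ => A * ε ^ 2 / 2) (nhdsWithin 0 (Set.Ioi 0))
        (nhds 0) := by
      have : Filter.Tendsto (fun ε : ℝ => A * ε ^ 2 / 2) (nhds 0) (nhds (A * 0 ^ 2 / 2)) :=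
        (Continuous.tendsto (by continuity) 0)
      simpa using this.mono_left nhdsWithin_le_nhds
    exact hcont.eventually_lt_const hδpos
  have hev4 : ∀ᶠ ε : ℝ in nhdsWithin 0 (Set.Ioi 0), ε < 1 / 2 := by
    have : Filter.Tendsto (fun ε : ℝ => ε) (nhdsWithin 0 (Set.Ioi 0)) (nhds 0) :=
      tendsto_id.mono_left nhdsWithin_le_nhds
    exact this.eventually_lt_const (by norm_num)
  obtain ⟨ε, hε1, hε3, hε4, hεpos⟩ :=
    (hev1.and (hev3.and (hev4.and eventually_mem_nhdsWithin))).exists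
  simp only [Set.mem_Ioi] at hεpos
  refine ⟨ε, c, hεpos, hε4.le, hc0, hc1, ?_, ?_⟩
  · rw [hc]
    calc 2 * (q * (A + (q - 1)) / 4) = q * ((A + (q - 1)) / 2) := by ring
      _ ≤ q * ((1 - (1 - ε) ^ (q - 1)) / ε) := by
          apply mul_le_mul_of_nonneg_left _ hq0.le
          exact le_of_lt hε1
      _ = q * (1 - (1 - ε) ^ (q - 1)) / ε := by ring
  · have hm : 0 ≤ A * ε ^ 2 / 2 := by positivity
    have hub := chordUB (q / 2) δ (A * ε ^ 2 / 2) (by linarith) hδpos hm hε3.le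
    have hKA : K * A < c := by
      rw [← lt_div_iff₀ hA0] at *
      exact hδK
    calc (1 + A * ε ^ 2 / 2) ^ (q / 2) ≤ 1 + (A * ε ^ 2 / 2) * K := hub
      _ < 1 + c * ε ^ 2 / 2 := by
          have hε2 : 0 < ε ^ 2 := by positivity
          nlinarith [hKA, hε2]

lemma cosInt (T : ℝ) (hT : 0 < T) :
    ∫ x in (-T)..T, Real.cos (Real.pi * x / T) = 0 := by
  have hc : (Real.pi / T) ≠ 0 := by positivity
  have harg : ∀ x : ℝ, Real.pi * x / T = (Real.pi / T) * x := fun x => by ring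
  simp only [harg]
  rw [intervalIntegral.integral_comp_mul_left (fun x => Real.cos x) hc]
  rw [show Real.pi / T * T = Real.pi from by field_simp]
  rw [show Real.pi / T * -T = -Real.pi from by field_simp]
  rw [integral_cos]
  simp

lemma cosSqInt (T : ℝ) (hT : 0 < T) :
    ∫ x in (-T)..T, Real.cos (Real.pi * x / T) ^ 2 = T := by
  have hc : (Real.pi / T) ≠ 0 := by positivity
  have harg : ∀ x : ℝ, Real.pi * x / T = (Real.pi / T) * x := fun x => by ring
  simp only [harg]
  rw [intervalIntegral.integral_comp_mul_left (fun x => Real.cos x ^ 2) hc]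
  rw [show Real.pi / T * T = Real.pi from by field_simp]
  rw [show Real.pi / T * -T = -Real.pi from by field_simp]
  rw [integral_cos_sq]
  simp

lemma intLB (T q c ε : ℝ) (hT : 0 < T) (hq2 : 2 < q) (hε0 : 0 < ε) (hε : ε ≤ 1 / 2)
    (hpoint : ∀ u ∈ Set.Icc (-ε) ε, 1 + q * u + c * u ^ 2 ≤ (1 + u) ^ q) :
    2 * T + c * ε ^ 2 * T
      ≤ ∫ x in (-T)..T, |1 + ε * Real.cos (Real.pi * x / T)| ^ q := by
  have hypos : ∀ x : ℝ, (0:ℝ) < 1 + ε * Real.cos (Real.pi * x / T) := by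
    intro x
    nlinarith [Real.neg_one_le_cos (Real.pi * x / T), Real.cos_le_one (Real.pi * x / T), hε0]
  have hccos : Continuous (fun x : ℝ => Real.cos (Real.pi * x / T)) := by fun_prop
  have hycont : Continuous (fun x : ℝ => 1 + ε * Real.cos (Real.pi * x / T)) :=
    continuous_const.add (continuous_const.mul hccos)
  have hIq : IntervalIntegrable
      (fun x : ℝ => |1 + ε * Real.cos (Real.pi * x / T)| ^ q) volume (-T) T := by
    apply Continuous.intervalIntegrable
    apply Continuous.rpow_const (continuous_abs.comp hycont)
    intro x
    exact Or.inr (by linarith)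
  have hIp : IntervalIntegrable
      (fun x : ℝ => 1 + q * (ε * Real.cos (Real.pi * x / T))
        + c * (ε * Real.cos (Real.pi * x / T)) ^ 2) volume (-T) T := by
    apply Continuous.intervalIntegrable
    exact (continuous_const.add (continuous_const.mul (continuous_const.mul hccos))).add
      (continuous_const.mul ((continuous_const.mul hccos).pow 2))
  have hmono := intervalIntegral.integral_mono_on (by linarith : -T ≤ T) hIp hIq (by
    intro x _
    have hu : ε * Real.cos (Real.pi * x / T) ∈ Set.Icc (-ε) ε := by
      constructor
      · nlinarith [Real.neg_one_le_cos (Real.pi * x / T)]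
      · nlinarith [Real.cos_le_one (Real.pi * x / T)]
    have := hpoint _ hu
    rw [abs_of_pos (hypos x)]
    exact this)
  refine le_trans (le_of_eq ?_) hmono
  have hI1 : IntervalIntegrable (fun _ : ℝ => (1:ℝ)) volume (-T) T :=
    intervalIntegrable_const
  have hIcos : IntervalIntegrable (fun x : ℝ => Real.cos (Real.pi * x / T)) volume (-T) T :=
    hccos.intervalIntegrable _ _
  have hIcos2 : IntervalIntegrable (fun x : ℝ => Real.cos (Real.pi * x / T) ^ 2) volume (-T) T :=
    (hccos.pow 2).intervalIntegrable _ _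
  have : (fun x : ℝ => 1 + q * (ε * Real.cos (Real.pi * x / T))
        + c * (ε * Real.cos (Real.pi * x / T)) ^ 2)
      = fun x : ℝ => (1 + (q * ε) * Real.cos (Real.pi * x / T))
        + (c * ε ^ 2) * Real.cos (Real.pi * x / T) ^ 2 := by
    funext x; ring
  rw [this]
  rw [intervalIntegral.integral_add (hI1.add (hIcos.const_mul _)) (hIcos2.const_mul _),
    intervalIntegral.integral_add hI1 (hIcos.const_mul _),
    intervalIntegral.integral_const_mul, intervalIntegral.integral_const_mul,
    cosInt T hT, cosSqInt T hT]
  simp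
  ring

lemma numIneq (T q A c ε : ℝ) (hT : 0 < T) (hq2 : 2 < q) (hA : 0 ≤ A) (hc : 0 ≤ c)
    (hε : 0 < ε) (hkey : (1 + A * ε ^ 2 / 2) ^ (q / 2) < 1 + c * ε ^ 2 / 2) :
    Real.sqrt (2 * T + ε ^ 2 * T * A)
      < (2 * T) ^ ((1:ℝ) / 2 - 1 / q) * (2 * T + c * ε ^ 2 * T) ^ ((1:ℝ) / q) := by
  have hq0 : (0:ℝ) < q := by linarith
  set m : ℝ := A * ε ^ 2 / 2 with hm
  set z : ℝ := c * ε ^ 2 / 2 with hz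
  have hm0 : 0 ≤ m := by positivity
  have hz0 : 0 ≤ z := by positivity
  have h2T : (0:ℝ) < 2 * T := by linarith
  have e1 : 2 * T + ε ^ 2 * T * A = (2 * T) * (1 + m) := by rw [hm]; ring
  have e2 : 2 * T + c * ε ^ 2 * T = (2 * T) * (1 + z) := by rw [hz]; ring
  rw [e1, e2]
  have h1 : (1 + m) ^ ((1:ℝ) / 2) < (1 + z) ^ ((1:ℝ) / q) := by
    have h := Real.rpow_lt_rpow (by positivity) hkey (by positivity : (0:ℝ) < 1 / q)
    rw [← Real.rpow_mul (by linarith : (0:ℝ) ≤ 1 + m)] at h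
    rw [show q / 2 * (1 / q) = (1:ℝ) / 2 from by field_simp] at h
    exact h
  have hL : Real.sqrt ((2 * T) * (1 + m)) = (2 * T) ^ ((1:ℝ) / 2) * (1 + m) ^ ((1:ℝ) / 2) := by
    rw [Real.sqrt_eq_rpow, Real.mul_rpow h2T.le (by linarith)]
  have hR : (2 * T) ^ ((1:ℝ) / 2 - 1 / q) * ((2 * T) * (1 + z)) ^ ((1:ℝ) / q)
      = (2 * T) ^ ((1:ℝ) / 2) * (1 + z) ^ ((1:ℝ) / q) := by
    rw [Real.mul_rpow h2T.le (by linarith), ← mul_assoc, ← Real.rpow_add h2T]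
    norm_num
  rw [hL, hR]
  exact mul_lt_mul_of_pos_left h1 (Real.rpow_pos_of_pos h2T _)

/-- for r > 0, T > 0 and q > (π/T)^{2r} + 2 there is a nonzero
y ∈ H^r(-T,T) with ‖y‖_{H^r} < (2T)^{1/2-1/q}·‖y‖_{L_q(-T,T)}; hence
λ_{q,r}(T) < (2T)^{1/2-1/q} and the constant function 1 does not attain the infimum. -/
theorem stmt_0 (r T q : ℝ) (hr : 0 < r) (hT : 0 < T) (hq2 : 2 < q)
    (hq : (Real.pi / T) ^ (2 * r) + 2 < q) :
    ∃ y : ℝ → ℝ, Continuous y ∧ Function.Periodic y (2 * T) ∧ y ≠ (fun _ => 0) ∧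
      Summable (fun k : ℤ => ‖fcoef T y k‖ ^ 2 * (|Real.pi * k / T| ^ (2 * r) + 1)) ∧
      Real.sqrt (hrNormSq r T y)
        < (2 * T) ^ (1 / 2 - 1 / q) * (∫ x in (-T)..T, |y x| ^ q) ^ (1 / q) := by
  have hπT : 0 < Real.pi / T := by positivity
  set A : ℝ := (Real.pi / T) ^ (2 * r) + 1 with hA
  have hA1 : 1 ≤ A := by
    have : 0 ≤ (Real.pi / T) ^ (2 * r) := Real.rpow_nonneg hπT.le _
    rw [hA]; linarith
  have hAq : A < q - 1 := by rw [hA]; linarith [hq]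
  obtain ⟨ε, c, hε0, hεhalf, hc0, hc1, hc2, hkey⟩ := choose_eps q A hq2 hA1 hAq
  refine ⟨fun x => 1 + ε * Real.cos (Real.pi * x / T), ?_, ?_, ?_, ?_, ?_⟩
  · have hccos : Continuous (fun x : ℝ => Real.cos (Real.pi * x / T)) := by fun_prop
    exact continuous_const.add (continuous_const.mul hccos)
  · intro x
    have hTne : T ≠ 0 := hT.ne'
    have harg : Real.pi * (x + 2 * T) / T = Real.pi * x / T + 2 * Real.pi := by
      field_simp
    simp only [harg, Real.cos_add_two_pi]
  · intro hy
    have h0 := congrFun hy 0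
    simp only [mul_zero, zero_div, Real.cos_zero, mul_one] at h0
    linarith
  · exact hr_summable r T ε hr hT
  · rw [hr_val r T ε hr hT]
    have hpoint := pointP q c ε hq2 hc0 hε0 hεhalf hc1 hc2
    have hS := intLB T q c ε hT hq2 hε0 hεhalf hpoint
    have hnum := numIneq T q A c ε hT hq2 (by linarith) hc0.le hε0 hkey
    rw [show ε ^ 2 * T * ((Real.pi / T) ^ (2 * r) + 1) = ε ^ 2 * T * A from by rw [hA]]
    refine lt_of_lt_of_le hnum ?_
    have h2T : (0:ℝ) < 2 * T := by linarith
    apply mul_le_mul_of_nonneg_left _ (Real.rpow_nonneg h2T.le _)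
    exact Real.rpow_le_rpow (by positivity) hS (by positivity)
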